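/- (Spitzer) Let X₁, X₂, … be independent identically distributed real random variables and set S_n = X₁ + ⋯ + X_n. Then Σ_{n≥1} (1/n) P(|S_n| > ε n) < ∞ for every ε > 0 if and only if E|X₁| < ∞ and E X₁ = 0. -/

import Mathlib

open MeasureTheory ProbabilityTheory Filter Real Topology
open scoped ENNReal NNReal

set_option maxHeartbeats 1000000

lemma aux_min_summable {c : ℝ} (hc : 0 < c) {p : ℕ → ℝ} (hnn : ∀ n, 0 ≤ p n)
    (hmono : ∀ m n, m ≤ n → p n ≤ p m)
    (hs : Summable (fun n : ℕ => min (c / (n : ℝ)) (p n))) : Summable p := by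
  set s : ℕ → ℝ := fun n => min (c / (n : ℝ)) (p n) with hs_def
  have hsn : ∀ n, 0 ≤ s n := fun n => le_min (by positivity) (hnn n)
  have htail : Tendsto (fun i => ∑' k, s (k + i)) atTop (𝓝 0) := tendsto_sum_nat_add s
  obtain ⟨N, hN⟩ : ∃ N : ℕ, 1 ≤ N ∧ ∑' k, s (k + N) < c/2 := by
    have := (htail.eventually (eventually_lt_nhds (show (0:ℝ) < c/2 by linarith)))
    rcases (this.and (eventually_ge_atTop 1)).exists with ⟨N, h1, h2⟩
    exact ⟨N, h2, h1⟩
  obtain ⟨hN1, hNtail⟩ := hN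
  have key : ∀ n, 2 * N ≤ n → p n ≤ c / (n : ℝ) := by
    intro n hn
    by_contra hcon
    push_neg at hcon
    have hn1 : 1 ≤ n := le_trans (by omega) hn
    have hnR : (1:ℝ) ≤ n := by exact_mod_cast hn1
    have hlow : ∀ m ∈ Finset.Icc N n, c / (n:ℝ) ≤ s m := by
      intro m hm
      rw [Finset.mem_Icc] at hm
      have hm1 : (1:ℝ) ≤ m := by exact_mod_cast le_trans hN1 hm.1
      have hmn : (m:ℝ) ≤ n := by exact_mod_cast hm.2
      refine le_min ?_ ?_
      · apply div_le_div_of_nonneg_left hc.le (by linarith) hmn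
      · exact le_trans hcon.le (hmono m n hm.2)
    have hcard : (Finset.Icc N n).card = n + 1 - N := Nat.card_Icc N n
    have hsum_ge : c/2 ≤ ∑ m ∈ Finset.Icc N n, s m := by
      calc c/2 ≤ (n + 1 - N : ℕ) * (c / (n:ℝ)) := by
            have h1 : ((n + 1 - N : ℕ) : ℝ) ≥ (n:ℝ)/2 := by
              have hNn : N ≤ n + 1 := by omega
              rw [Nat.cast_sub hNn]
              push_cast
              have : (2*N : ℝ) ≤ n := by exact_mod_cast hn
              linarith
            have h2 : (n:ℝ)/2 * (c/n) = c/2 := by field_simp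
            calc c/2 = (n:ℝ)/2 * (c/n) := h2.symm
              _ ≤ ((n + 1 - N : ℕ):ℝ) * (c/n) := by
                  apply mul_le_mul_of_nonneg_right h1 (by positivity)
        _ ≤ ∑ m ∈ Finset.Icc N n, s m := by
            rw [← hcard, ← nsmul_eq_mul]
            exact Finset.card_nsmul_le_sum _ _ _ hlow
    have hsum_le : ∑ m ∈ Finset.Icc N n, s m ≤ ∑' k, s (k + N) := by
      rw [show Finset.Icc N n = Finset.Ico N (n+1) by rw [Finset.Ico_add_one_right_eq_Icc],
        Finset.sum_Ico_eq_sum_range]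
      have hsummable : Summable (fun k => s (k + N)) := (summable_nat_add_iff N).2 hs
      calc ∑ m ∈ Finset.range (n + 1 - N), s (N + m)
          = ∑ m ∈ Finset.range (n + 1 - N), s (m + N) := by
            apply Finset.sum_congr rfl; intro m _; rw [Nat.add_comm]
        _ ≤ ∑' k, s (k + N) := hsummable.sum_le_tsum _ (fun k _ => hsn _)
    linarith
  have : Summable (fun n => p (n + 2*N)) := by
    apply ((summable_nat_add_iff (2*N)).2 hs).congr
    intro n
    simp only [hs_def]
    exact min_eq_right (key _ (by omega))
  exact (summable_nat_add_iff (2*N)).1 this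

lemma bonferroni {Ω : Type*} [MeasurableSpace Ω] (μ : Measure Ω) (A : ℕ → Set Ω)
    (hA : ∀ k, MeasurableSet (A k)) (K : ℕ) :
    ∑ k ∈ Finset.range K, μ (A k) ≤ μ (⋃ k ∈ Finset.range K, A k) +
      ∑ k ∈ Finset.range K, ∑ j ∈ Finset.range k, μ (A j ∩ A k) := by
  induction K with
  | zero => simp
  | succ K ih =>
    rw [Finset.sum_range_succ, Finset.sum_range_succ (f := fun k => ∑ j ∈ Finset.range k, μ (A j ∩ A k))]
    have hU : (⋃ k ∈ Finset.range (K+1), A k) = (⋃ k ∈ Finset.range K, A k) ∪ A K := by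
      rw [Finset.range_add_one]
      simp [Set.union_comm]
    set U := ⋃ k ∈ Finset.range K, A k with hUdef
    have h1 : μ U + μ (A K) = μ (U ∪ A K) + μ (U ∩ A K) := (measure_union_add_inter U (hA K)).symm
    have h2 : μ (U ∩ A K) ≤ ∑ j ∈ Finset.range K, μ (A j ∩ A K) := by
      have : U ∩ A K = ⋃ j ∈ Finset.range K, (A j ∩ A K) := by
        rw [hUdef, Set.iUnion₂_inter]
      rw [this]
      exact measure_biUnion_finset_le _ _
    calc ∑ k ∈ Finset.range K, μ (A k) + μ (A K)
        ≤ (μ U + ∑ k ∈ Finset.range K, ∑ j ∈ Finset.range k, μ (A j ∩ A k)) + μ (A K) :=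
          add_le_add ih le_rfl
      _ = (μ U + μ (A K)) + ∑ k ∈ Finset.range K, ∑ j ∈ Finset.range k, μ (A j ∩ A k) := by ring
      _ = (μ (U ∪ A K) + μ (U ∩ A K)) + ∑ k ∈ Finset.range K, ∑ j ∈ Finset.range k, μ (A j ∩ A k) := by rw [h1]
      _ ≤ (μ (U ∪ A K) + ∑ j ∈ Finset.range K, μ (A j ∩ A K)) + ∑ k ∈ Finset.range K, ∑ j ∈ Finset.range k, μ (A j ∩ A k) := by
          gcongr
      _ = μ (⋃ k ∈ Finset.range (K+1), A k) + (∑ k ∈ Finset.range K, ∑ j ∈ Finset.range k, μ (A j ∩ A k) + ∑ j ∈ Finset.range K, μ (A j ∩ A K)) := by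
          rw [hU]; ring

lemma integrable_of_tail_summable {Ω : Type*} [MeasureSpace Ω] [IsProbabilityMeasure (ℙ : Measure Ω)]
    {Y : Ω → ℝ} (hm : Measurable Y)
    (hs : Summable (fun n : ℕ => (ℙ {ω | (n:ℝ) < |Y ω|}).toReal)) : Integrable Y ℙ := by
  have hAmeas : ∀ n : ℕ, MeasurableSet {ω | (n:ℝ) < |Y ω|} :=
    fun n => measurableSet_lt measurable_const hm.abs
  have htsum : (∑' n : ℕ, ℙ {ω | (n:ℝ) < |Y ω|}) < ∞ := by
    have h1 : ∀ n : ℕ, ℙ {ω | (n:ℝ) < |Y ω|} = ENNReal.ofReal ((ℙ {ω | (n:ℝ) < |Y ω|}).toReal) :=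
      fun n => (ENNReal.ofReal_toReal (measure_ne_top _ _)).symm
    calc (∑' n : ℕ, ℙ {ω | (n:ℝ) < |Y ω|})
        = ∑' n : ℕ, ENNReal.ofReal ((ℙ {ω | (n:ℝ) < |Y ω|}).toReal) := by
          exact tsum_congr h1
      _ = ENNReal.ofReal (∑' n : ℕ, (ℙ {ω | (n:ℝ) < |Y ω|}).toReal) :=
          (ENNReal.ofReal_tsum_of_nonneg (fun n => ENNReal.toReal_nonneg) hs).symm
      _ < ∞ := ENNReal.ofReal_lt_top
  refine ⟨hm.aestronglyMeasurable, ?_⟩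
  rw [hasFiniteIntegral_iff_norm]
  have hpt : ∀ ω, ENNReal.ofReal ‖Y ω‖ ≤
      ∑' n : ℕ, Set.indicator {ω | (n:ℝ) < |Y ω|} (fun _ => (1:ℝ≥0∞)) ω := by
    intro ω
    set r := ‖Y ω‖ with hr
    have hr0 : 0 ≤ r := norm_nonneg _
    rcases eq_or_lt_of_le hr0 with h0 | h0
    · simp [← h0]
    · have hceil : ∀ n ∈ Finset.range ⌈r⌉₊, Set.indicator {ω | (n:ℝ) < |Y ω|} (fun _ => (1:ℝ≥0∞)) ω = 1 := by
        intro n hn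
        rw [Finset.mem_range] at hn
        have : (n : ℝ) < r := by
          have h1 : (n:ℝ) ≤ (⌈r⌉₊ : ℝ) - 1 := by
            have : (n:ℝ) + 1 ≤ (⌈r⌉₊:ℝ) := by exact_mod_cast hn
            linarith
          have h2 : (⌈r⌉₊ : ℝ) - 1 < r := by
            have := Nat.ceil_lt_add_one hr0
            linarith
          linarith
        have : ω ∈ {ω | (n:ℝ) < |Y ω|} := by
          simp only [Set.mem_setOf_eq]
          rwa [← Real.norm_eq_abs]
        simp [Set.indicator_of_mem this]
      calc ENNReal.ofReal r ≤ (⌈r⌉₊ : ℝ≥0∞) := by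
            rw [show ((⌈r⌉₊:ℕ) : ℝ≥0∞) = ENNReal.ofReal (⌈r⌉₊ : ℝ) by
              simp [ENNReal.ofReal_natCast]]
            exact ENNReal.ofReal_le_ofReal (Nat.le_ceil r)
        _ = ∑ n ∈ Finset.range ⌈r⌉₊, Set.indicator {ω | (n:ℝ) < |Y ω|} (fun _ => (1:ℝ≥0∞)) ω := by
            rw [Finset.sum_congr rfl hceil]; simp
        _ ≤ ∑' n : ℕ, Set.indicator {ω | (n:ℝ) < |Y ω|} (fun _ => (1:ℝ≥0∞)) ω :=
            ENNReal.sum_le_tsum _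
  calc ∫⁻ ω, ENNReal.ofReal ‖Y ω‖ ∂ℙ
      ≤ ∫⁻ ω, ∑' n : ℕ, Set.indicator {ω | (n:ℝ) < |Y ω|} (fun _ => (1:ℝ≥0∞)) ω ∂ℙ :=
        lintegral_mono hpt
    _ = ∑' n : ℕ, ∫⁻ ω, Set.indicator {ω | (n:ℝ) < |Y ω|} (fun _ => (1:ℝ≥0∞)) ω ∂ℙ :=
        lintegral_tsum (fun n => ((measurable_const).indicator (hAmeas n)).aemeasurable)
    _ = ∑' n : ℕ, ℙ {ω | (n:ℝ) < |Y ω|} := by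
        refine tsum_congr fun n => ?_
        rw [lintegral_indicator (hAmeas n)]
        simp
    _ < ∞ := htsum

lemma numeric_aux {n : ℕ} {p a q : ℝ} (hn : 1 ≤ n) (hp0 : 0 ≤ p) (ha0 : 0 ≤ a)
    (hpq : p ≤ q) (hq : q ≤ 1/8) (ha : a ≤ 1/32)
    (hkey : ∀ K : ℕ, 1 ≤ K → K ≤ n → (K:ℝ) * p * (1 - a - q) ≤ a + (K:ℝ)^2 * p^2) :
    (n:ℝ) * p ≤ 4 * a := by
  have h34 : (3:ℝ)/4 ≤ 1 - a - q := by linarith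
  have hn0 : (0:ℝ) ≤ n := Nat.cast_nonneg n
  rcases le_or_gt ((n:ℝ) * p) (1/2) with hnp | hnp
  · have hk := hkey n hn le_rfl
    nlinarith [mul_nonneg hn0 hp0]
  · exfalso
    have hppos : 0 < p := by
      rcases eq_or_lt_of_le hp0 with h|h
      · exfalso; rw [← h] at hnp; simp at hnp; linarith
      · exact h
    set K : ℕ := ⌊1/(4*p)⌋₊ with hK_def
    have hx0 : 0 ≤ 1/(4*p) := by positivity
    have hK_le : (K:ℝ) ≤ 1/(4*p) := Nat.floor_le hx0
    have hK_ge : 1/(4*p) - 1 ≤ (K:ℝ) := (Nat.sub_one_lt_floor (1/(4*p))).le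
    have hp18 : p ≤ 1/8 := le_trans hpq hq
    have hK1 : 1 ≤ K := by
      have h1 : (1:ℝ) ≤ 1/(4*p) - 1 := by
        rw [le_sub_iff_add_le, le_div_iff₀ (by positivity)]
        linarith
      have h2 : (1:ℝ) ≤ (K:ℝ) := le_trans h1 hK_ge
      exact_mod_cast h2
    have hKn : K ≤ n := by
      have h2 : 1/(4*p) < n := by
        rw [div_lt_iff₀ (by positivity)]
        nlinarith
      have h3 : (K:ℝ) < n := lt_of_le_of_lt hK_le h2
      exact_mod_cast h3.le
    have hKp_le : (K:ℝ)*p ≤ 1/4 := by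
      calc (K:ℝ)*p ≤ (1/(4*p))*p := by nlinarith
        _ = 1/4 := by field_simp
    have hKp_ge : 1/8 ≤ (K:ℝ)*p := by
      have h4 : (1:ℝ)/4 - p = (1/(4*p) - 1)*p := by field_simp
      have h5 : (1/(4*p) - 1)*p ≤ (K:ℝ)*p := by nlinarith
      linarith
    have hk := hkey K hK1 hKn
    nlinarith [hKp_le, hKp_ge, mul_nonneg (Nat.cast_nonneg K : (0:ℝ) ≤ K) hp0]

lemma trunc_sq_le {α : Type*} (f : α → ℝ) {A : ℝ} (hA : 0 < A) (x : α) :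
    (truncation f A x)^2 ≤ (truncation (fun y => |f y|) A x)^2 := by
  by_cases h : f x ∈ Set.Ioc (-A) A
  · have h' : |f x| ∈ Set.Ioc (-A) A := by
      obtain ⟨h1, h2⟩ := h
      constructor
      · linarith [abs_nonneg (f x)]
      · rw [abs_le]; constructor <;> linarith
    simp only [truncation, Function.comp_apply, Set.indicator_of_mem h,
      Set.indicator_of_mem h', id]
    rw [sq_abs]
  · simp only [truncation, Function.comp_apply, Set.indicator_of_notMem h, id]
    simpa using sq_nonneg _

lemma key_estimate {Ω : Type*} [MeasureSpace Ω] [IsProbabilityMeasure (ℙ : Measure Ω)]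
    (X : ℕ → Ω → ℝ) (hmeas : ∀ i, Measurable (X i))
    (hindep : iIndepFun X (ℙ : Measure Ω))
    (hident : ∀ i, IdentDistrib (X i) (X 0) (ℙ : Measure Ω) (ℙ : Measure Ω))
    (n K : ℕ) (hK1 : 1 ≤ K) (hKn : K ≤ n) :
    (K:ℝ) * (ℙ {ω | (n:ℝ) < |X 0 ω|}).toReal *
      (1 - (ℙ {ω | (n:ℝ)/3 < |∑ i ∈ Finset.range n, X i ω|}).toReal
         - (ℙ {ω | (n:ℝ)/3 < |X 0 ω|}).toReal)
      ≤ (ℙ {ω | (n:ℝ)/3 < |∑ i ∈ Finset.range n, X i ω|}).toReal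
        + (K:ℝ)^2 * (ℙ {ω | (n:ℝ) < |X 0 ω|}).toReal^2 := by
  classical
  set Bset : Set ℝ := {x | (n:ℝ) < |x|} with hBset_def
  set Qset : Set ℝ := {x | (n:ℝ)/3 < |x|} with hQset_def
  set Cset : Set ℝ := {x | |x| ≤ 2*(n:ℝ)/3} with hCset_def
  have hBset : MeasurableSet Bset := measurableSet_lt measurable_const continuous_abs.measurable
  have hQset : MeasurableSet Qset := measurableSet_lt measurable_const continuous_abs.measurable
  have hCset : MeasurableSet Cset := measurableSet_le continuous_abs.measurable measurable_const
  set S : Ω → ℝ := fun ω => ∑ i ∈ Finset.range n, X i ω with hS_def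
  have hSmeas : Measurable S := by
    apply Finset.measurable_sum
    intro i _
    exact hmeas i
  set Y : ℕ → Ω → ℝ := fun k => ∑ j ∈ (Finset.range n).erase k, X j with hY_def
  have hYmeas : ∀ k, Measurable (Y k) := by
    intro k
    have : Y k = fun ω => ∑ j ∈ (Finset.range n).erase k, X j ω := by
      ext ω; simp [hY_def, Finset.sum_apply]
    rw [this]
    exact Finset.measurable_sum _ (fun i _ => hmeas i)
  set A : ℕ → Set Ω := fun k => (X k) ⁻¹' Bset ∩ (Y k) ⁻¹' Cset with hA_def
  have hAmeas : ∀ k, MeasurableSet (A k) :=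
    fun k => ((hBset.preimage (hmeas k)).inter (hCset.preimage (hYmeas k)))
  set p : ℝ := (ℙ {ω | (n:ℝ) < |X 0 ω|}).toReal with hp_def
  set a : ℝ := (ℙ {ω | (n:ℝ)/3 < |S ω|}).toReal with ha_def
  set q : ℝ := (ℙ {ω | (n:ℝ)/3 < |X 0 ω|}).toReal with hq_def
  have hXY : ∀ k ∈ Finset.range n, ∀ ω, S ω = X k ω + Y k ω := by
    intro k hk ω
    rw [hY_def]
    simp only [Finset.sum_apply]
    rw [hS_def]
    simp only
    rw [← Finset.add_sum_erase _ _ hk]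
  -- each A k is inside the big-sum event
  have hsub : ∀ k ∈ Finset.range K, A k ⊆ {ω | (n:ℝ)/3 < |S ω|} := by
    intro k hk ω hω
    rw [Finset.mem_range] at hk
    have hkn : k ∈ Finset.range n := Finset.mem_range.2 (lt_of_lt_of_le hk hKn)
    obtain ⟨h1, h2⟩ := hω
    have h1' : (n:ℝ) < |X k ω| := h1
    have h2' : |Y k ω| ≤ 2*(n:ℝ)/3 := h2
    have hsum := hXY k hkn ω
    have : |X k ω| ≤ |S ω| + |Y k ω| := by
      have := abs_sub (S ω) (Y k ω)
      rw [show S ω - Y k ω = X k ω by linarith [hsum]] at this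
      linarith [this]
    simp only [Set.mem_setOf_eq]
    linarith
  -- measure of A k
  have hAk : ∀ k ∈ Finset.range K,
      ℙ (A k) = ℙ ((X k) ⁻¹' Bset) * ℙ ((Y k) ⁻¹' Cset) := by
    intro k hk
    have hindepYX : IndepFun (Y k) (X k) ℙ :=
      hindep.indepFun_finset_sum_of_notMem hmeas (Finset.notMem_erase k _)
    rw [hA_def]
    simp only
    rw [Set.inter_comm]
    rw [hindepYX.measure_inter_preimage_eq_mul _ _ hCset hBset, mul_comm]
  have hXkB : ∀ k, ℙ ((X k) ⁻¹' Bset) = ℙ {ω | (n:ℝ) < |X 0 ω|} :=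
    fun k => (hident k).measure_mem_eq hBset
  have hXkQ : ∀ k, (ℙ ((X k) ⁻¹' Qset)).toReal = q :=
    fun k => by rw [(hident k).measure_mem_eq hQset]; rfl
  -- lower bound on the ℙ(C k)
  have hC_lower : ∀ k ∈ Finset.range K, 1 - a - q ≤ (ℙ ((Y k) ⁻¹' Cset)).toReal := by
    intro k hk
    have hcompl : ((Y k) ⁻¹' Cset)ᶜ ⊆ {ω | (n:ℝ)/3 < |S ω|} ∪ (X k) ⁻¹' Qset := by
      intro ω hω
      rw [Finset.mem_range] at hk
      have hkn : k ∈ Finset.range n := Finset.mem_range.2 (lt_of_lt_of_le hk hKn)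
      simp only [Set.mem_compl_iff, Set.mem_preimage, hCset_def, Set.mem_setOf_eq, not_le] at hω
      by_contra hcon
      simp only [Set.mem_union, Set.mem_setOf_eq, Set.mem_preimage, hQset_def, not_or, not_lt] at hcon
      obtain ⟨hS_le, hX_le⟩ := hcon
      have hsum := hXY k hkn ω
      have : |Y k ω| ≤ |S ω| + |X k ω| := by
        have h := abs_sub (S ω) (X k ω)
        rw [show S ω - X k ω = Y k ω by linarith [hsum]] at h
        linarith
      linarith
    have h1 : (ℙ (((Y k) ⁻¹' Cset)ᶜ)).toReal ≤ a + q := by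
      have hle : ℙ (((Y k) ⁻¹' Cset)ᶜ) ≤ ℙ {ω | (n:ℝ)/3 < |S ω|} + ℙ ((X k) ⁻¹' Qset) :=
        le_trans (measure_mono hcompl) (measure_union_le _ _)
      calc (ℙ (((Y k) ⁻¹' Cset)ᶜ)).toReal
          ≤ (ℙ {ω | (n:ℝ)/3 < |S ω|} + ℙ ((X k) ⁻¹' Qset)).toReal :=
            ENNReal.toReal_mono (by finiteness) hle
        _ = a + q := by
            rw [ENNReal.toReal_add (measure_ne_top _ _) (measure_ne_top _ _), hXkQ k]
    have h2 : (ℙ ((Y k) ⁻¹' Cset)).toReal + (ℙ (((Y k) ⁻¹' Cset)ᶜ)).toReal = 1 := by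
      rw [← ENNReal.toReal_add (measure_ne_top _ _) (measure_ne_top _ _),
        measure_add_measure_compl (hCset.preimage (hYmeas k))]
      simp
    linarith
  -- pairwise bounds
  have hpairs : ∀ k ∈ Finset.range K, ∀ j ∈ Finset.range k,
      (ℙ (A j ∩ A k)).toReal ≤ p^2 := by
    intro k hk j hj
    rw [Finset.mem_range] at hj
    have hjk : j ≠ k := Nat.ne_of_lt hj
    have hsub2 : A j ∩ A k ⊆ (X j) ⁻¹' Bset ∩ (X k) ⁻¹' Bset := by
      intro ω hω
      exact ⟨hω.1.1, hω.2.1⟩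
    have heq : ℙ ((X j) ⁻¹' Bset ∩ (X k) ⁻¹' Bset) =
        ℙ ((X j) ⁻¹' Bset) * ℙ ((X k) ⁻¹' Bset) :=
      (hindep.indepFun hjk).measure_inter_preimage_eq_mul _ _ hBset hBset
    calc (ℙ (A j ∩ A k)).toReal ≤ (ℙ ((X j) ⁻¹' Bset ∩ (X k) ⁻¹' Bset)).toReal :=
          ENNReal.toReal_mono (measure_ne_top _ _) (measure_mono hsub2)
      _ = p^2 := by
          rw [heq, ENNReal.toReal_mul, hXkB j, hXkB k, ← hp_def]
          ring
  -- Bonferroni in ℝ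
  have hbonf := bonferroni ℙ A hAmeas K
  have hfin1 : ℙ (⋃ k ∈ Finset.range K, A k) ≠ ∞ := measure_ne_top _ _
  have hsum_ne : ∑ k ∈ Finset.range K, ∑ j ∈ Finset.range k, ℙ (A j ∩ A k) ≠ ∞ :=
    ENNReal.sum_ne_top.2 (fun k _ => ENNReal.sum_ne_top.2 (fun j _ => measure_ne_top _ _))
  have hRHS_ne : ℙ (⋃ k ∈ Finset.range K, A k) +
      ∑ k ∈ Finset.range K, ∑ j ∈ Finset.range k, ℙ (A j ∩ A k) ≠ ∞ :=
    ENNReal.add_ne_top.2 ⟨hfin1, hsum_ne⟩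
  have hbonfR : ∑ k ∈ Finset.range K, (ℙ (A k)).toReal ≤
      (ℙ (⋃ k ∈ Finset.range K, A k)).toReal +
      ∑ k ∈ Finset.range K, ∑ j ∈ Finset.range k, (ℙ (A j ∩ A k)).toReal := by
    have := ENNReal.toReal_mono hRHS_ne hbonf
    rw [ENNReal.toReal_sum (fun k _ => measure_ne_top _ _)] at this
    rw [ENNReal.toReal_add hfin1 hsum_ne] at this
    rw [ENNReal.toReal_sum (fun k _ => ENNReal.sum_ne_top.2 (fun j _ => measure_ne_top _ _))] at this
    calc ∑ k ∈ Finset.range K, (ℙ (A k)).toReal ≤ _ := this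
      _ ≤ _ := by
        gcongr with k hk
        rw [ENNReal.toReal_sum (fun j _ => measure_ne_top _ _)]
  -- lower bound LHS
  have hLHS : (K:ℝ) * p * (1 - a - q) ≤ ∑ k ∈ Finset.range K, (ℙ (A k)).toReal := by
    have : ∀ k ∈ Finset.range K, p * (1 - a - q) ≤ (ℙ (A k)).toReal := by
      intro k hk
      rw [hAk k hk, ENNReal.toReal_mul, hXkB k, ← hp_def]
      rcases le_or_gt (1 - a - q) 0 with h | h
      · have h0 : (ℙ {ω | (n:ℝ) < |X 0 ω|}).toReal * (1 - a - q) ≤ 0 :=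
          mul_nonpos_of_nonneg_of_nonpos ENNReal.toReal_nonneg h
        exact le_trans h0 (by positivity)
      · exact mul_le_mul_of_nonneg_left (hC_lower k hk) ENNReal.toReal_nonneg
    calc (K:ℝ) * p * (1 - a - q) = ∑ _k ∈ Finset.range K, p * (1 - a - q) := by
          rw [Finset.sum_const, Finset.card_range, nsmul_eq_mul]; ring
      _ ≤ _ := Finset.sum_le_sum this
  -- upper bound RHS
  have hUB1 : (ℙ (⋃ k ∈ Finset.range K, A k)).toReal ≤ a := by
    apply ENNReal.toReal_mono (measure_ne_top _ _)
    apply measure_mono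
    exact Set.iUnion₂_subset hsub
  have hUB2 : ∑ k ∈ Finset.range K, ∑ j ∈ Finset.range k, (ℙ (A j ∩ A k)).toReal ≤
      (K:ℝ)^2 * p^2 := by
    calc ∑ k ∈ Finset.range K, ∑ j ∈ Finset.range k, (ℙ (A j ∩ A k)).toReal
        ≤ ∑ k ∈ Finset.range K, ∑ _j ∈ Finset.range k, p^2 := by
          apply Finset.sum_le_sum
          intro k hk
          exact Finset.sum_le_sum (hpairs k hk)
      _ = ∑ k ∈ Finset.range K, (k:ℝ) * p^2 := by
          apply Finset.sum_congr rfl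
          intro k _
          rw [Finset.sum_const, Finset.card_range, nsmul_eq_mul]
      _ ≤ ∑ _k ∈ Finset.range K, (K:ℝ) * p^2 := by
          apply Finset.sum_le_sum
          intro k hk
          rw [Finset.mem_range] at hk
          have : (k:ℝ) ≤ K := by exact_mod_cast hk.le
          have : (0:ℝ) ≤ p^2 := by positivity
          nlinarith
      _ = (K:ℝ)^2 * p^2 := by
          rw [Finset.sum_const, Finset.card_range, nsmul_eq_mul]; ring
  linarith

lemma spitzer_integrable {Ω : Type*} [MeasureSpace Ω] [IsProbabilityMeasure (ℙ : Measure Ω)]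
    (X : ℕ → Ω → ℝ) (hmeas : ∀ i, Measurable (X i))
    (hindep : iIndepFun X (ℙ : Measure Ω))
    (hident : ∀ i, IdentDistrib (X i) (X 0) (ℙ : Measure Ω) (ℙ : Measure Ω))
    (hyp : Summable (fun n : ℕ =>
        (1 / ((n : ℝ) + 1)) *
          (ℙ {ω | (1/3:ℝ) * ((n : ℝ) + 1) < |∑ i ∈ Finset.range (n + 1), X i ω|}).toReal)) :
    Integrable (X 0) (ℙ : Measure Ω) := by
  classical
  set pR : ℕ → ℝ := fun m => (ℙ {ω | (m:ℝ) < |X 0 ω|}).toReal with hpR_def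
  set qR : ℕ → ℝ := fun m => (ℙ {ω | (m:ℝ)/3 < |X 0 ω|}).toReal with hqR_def
  set aR : ℕ → ℝ := fun m => (ℙ {ω | (m:ℝ)/3 < |∑ i ∈ Finset.range m, X i ω|}).toReal with haR_def
  -- re-index the hypothesis
  have hyp' : Summable (fun n : ℕ => (1 / ((n:ℝ)+1)) * aR (n+1)) := by
    apply hyp.congr
    intro n
    have hc : (1/3:ℝ) * ((n:ℝ)+1) = ((n+1 : ℕ):ℝ)/3 := by push_cast; ring
    rw [haR_def]
    simp only
    rw [hc]
  -- q tends to zero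
  have hq0 : Tendsto qR atTop (𝓝 0) := by
    have hmeasset : ∀ m : ℕ, MeasurableSet {ω | (m:ℝ)/3 < |X 0 ω|} :=
      fun m => measurableSet_lt measurable_const (hmeas 0).abs
    have hanti : Antitone (fun m : ℕ => {ω | (m:ℝ)/3 < |X 0 ω|}) := by
      intro m n hmn ω hω
      simp only [Set.mem_setOf_eq] at *
      have : (m:ℝ) ≤ (n:ℝ) := by exact_mod_cast hmn
      linarith
    have hcap : (⋂ m : ℕ, {ω | (m:ℝ)/3 < |X 0 ω|}) = ∅ := by
      ext ω
      simp only [Set.mem_iInter, Set.mem_setOf_eq, Set.mem_empty_iff_false, iff_false, not_forall,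
        not_lt]
      obtain ⟨m, hm⟩ := exists_nat_ge (3 * |X 0 ω|)
      exact ⟨m, by linarith⟩
    have htend := tendsto_measure_iInter_atTop
      (fun m => (hmeasset m).nullMeasurableSet) hanti ⟨0, measure_ne_top ℙ _⟩
    rw [hcap] at htend
    simp only [measure_empty] at htend
    have := (ENNReal.tendsto_toReal ENNReal.zero_ne_top).comp htend
    exact this
  obtain ⟨N₀, hN₀⟩ : ∃ N₀ : ℕ, ∀ m ≥ N₀, qR m ≤ 1/8 := by
    have := hq0.eventually (eventually_le_nhds (show (0:ℝ) < 1/8 by norm_num))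
    exact this.exists_forall_of_atTop
  set M : ℕ := max N₀ 1 with hM_def
  -- key bound for m ≥ M
  have hbound : ∀ m ≥ M, min ((1/8) / (m:ℝ)) (pR m) ≤ 8 * ((1 / (m:ℝ)) * aR m) := by
    intro m hm
    have hm1 : 1 ≤ m := le_trans (le_max_right _ _) hm
    have hm1R : (1:ℝ) ≤ m := by exact_mod_cast hm1
    have hmpos : (0:ℝ) < m := by linarith
    have hq18 : qR m ≤ 1/8 := hN₀ m (le_trans (le_max_left _ _) hm)
    have hp0 : 0 ≤ pR m := ENNReal.toReal_nonneg
    have ha0 : 0 ≤ aR m := ENNReal.toReal_nonneg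
    have hpq : pR m ≤ qR m := by
      apply ENNReal.toReal_mono (measure_ne_top _ _)
      apply measure_mono
      intro ω hω
      simp only [Set.mem_setOf_eq] at *
      linarith
    have hkey : ∀ K : ℕ, 1 ≤ K → K ≤ m →
        (K:ℝ) * pR m * (1 - aR m - qR m) ≤ aR m + (K:ℝ)^2 * (pR m)^2 :=
      fun K hK1 hKm => key_estimate X hmeas hindep hident m K hK1 hKm
    rcases le_or_gt (aR m) (1/32) with ha | ha
    · have hnp := numeric_aux hm1 hp0 ha0 hpq hq18 ha hkey
      calc min ((1/8) / (m:ℝ)) (pR m) ≤ pR m := min_le_right _ _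
        _ ≤ 4 * aR m / m := by
            rw [le_div_iff₀ hmpos]
            nlinarith
        _ ≤ 8 * ((1 / (m:ℝ)) * aR m) := by
            rw [div_le_iff₀ hmpos]
            have h8 : (8:ℝ) * ((1 / (m:ℝ)) * aR m) * m = 8 * aR m := by field_simp
            rw [h8]
            linarith
    · calc min ((1/8) / (m:ℝ)) (pR m) ≤ (1/8) / (m:ℝ) := min_le_left _ _
        _ ≤ 8 * ((1 / (m:ℝ)) * aR m) := by
            rw [div_le_iff₀ hmpos]
            have h8 : (8:ℝ) * ((1 / (m:ℝ)) * aR m) * m = 8 * aR m := by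
              field_simp
            rw [h8]
            linarith
  -- summability of the min sequence
  have hsmin : Summable (fun m : ℕ => min ((1/8) / (m:ℝ)) (pR m)) := by
    rw [← summable_nat_add_iff M]
    apply Summable.of_nonneg_of_le
    · intro n
      exact le_min (by positivity) ENNReal.toReal_nonneg
    · intro n
      exact hbound (n + M) (by omega)
    · -- Summable fun n => 8 * ((1/(n+M)) * aR (n+M))
      have h1 := (summable_nat_add_iff (M-1)).2 hyp'
      apply Summable.mul_left
      apply h1.congr
      intro n
      have h2 : (n + (M-1)) + 1 = n + M := by omega
      rw [h2]
      congr 1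
      rw [← h2]
      push_cast
      ring
  have hpmono : ∀ m n : ℕ, m ≤ n → pR n ≤ pR m := by
    intro m n hmn
    apply ENNReal.toReal_mono (measure_ne_top _ _)
    apply measure_mono
    intro ω hω
    simp only [Set.mem_setOf_eq] at *
    have : (m:ℝ) ≤ (n:ℝ) := by exact_mod_cast hmn
    linarith
  have hpsummable : Summable pR :=
    aux_min_summable (by norm_num : (0:ℝ) < 1/8) (fun n => ENNReal.toReal_nonneg) hpmono hsmin
  exact integrable_of_tail_summable (hmeas 0) hpsummable

lemma spitzer_mean_zero {Ω : Type*} [MeasureSpace Ω] [IsProbabilityMeasure (ℙ : Measure Ω)]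
    (X : ℕ → Ω → ℝ) (hmeas : ∀ i, Measurable (X i))
    (hindep : iIndepFun X (ℙ : Measure Ω))
    (hident : ∀ i, IdentDistrib (X i) (X 0) (ℙ : Measure Ω) (ℙ : Measure Ω))
    (hint : Integrable (X 0) (ℙ : Measure Ω))
    (hyp : ∀ ε : ℝ, 0 < ε →
      Summable (fun n : ℕ =>
        (1 / ((n : ℝ) + 1)) *
          (ℙ {ω | ε * ((n : ℝ) + 1) < |∑ i ∈ Finset.range (n + 1), X i ω|}).toReal)) :
    (∫ ω, X 0 ω ∂(ℙ : Measure Ω)) = 0 := by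
  classical
  by_contra hμ
  set μ : ℝ := ∫ ω, X 0 ω ∂(ℙ : Measure Ω) with hμ_def
  set ε : ℝ := |μ| / 2 with hε_def
  have hεpos : 0 < ε := by
    have : 0 < |μ| := abs_pos.2 hμ
    rw [hε_def]; linarith
  have hpair : Pairwise (Function.onFun (IndepFun · · (ℙ : Measure Ω)) X) :=
    fun _ _ hij => hindep.indepFun hij
  have hslln := strong_law_ae_real X hint hpair hident
  -- a.e. eventually the event holds
  have hae : ∀ᵐ ω ∂(ℙ : Measure Ω), ∀ᶠ n : ℕ in atTop,
      ε * (n:ℝ) < |∑ i ∈ Finset.range n, X i ω| := by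
    filter_upwards [hslln] with ω hω
    have habs : Tendsto (fun n : ℕ => |(∑ i ∈ Finset.range n, X i ω) / n|) atTop (𝓝 |μ|) :=
      hω.abs
    have hgt : ∀ᶠ n : ℕ in atTop, ε < |(∑ i ∈ Finset.range n, X i ω) / n| :=
      habs.eventually (eventually_gt_nhds (by rw [hε_def]; linarith [abs_pos.2 hμ]))
    filter_upwards [hgt, eventually_gt_atTop 0] with n hn hn0
    have hn0R : (0:ℝ) < n := by exact_mod_cast hn0
    rw [abs_div, abs_of_pos hn0R] at hn
    calc ε * (n:ℝ) < |∑ i ∈ Finset.range n, X i ω| / n * n := by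
          exact mul_lt_mul_of_pos_right hn hn0R
      _ = |∑ i ∈ Finset.range n, X i ω| := by field_simp
  -- events G N
  set G : ℕ → Set Ω := fun N => {ω | ∀ n ≥ N, ε * (n:ℝ) < |∑ i ∈ Finset.range n, X i ω|}
    with hG_def
  have hGmeas : ∀ N, MeasurableSet (G N) := by
    intro N
    have : G N = ⋂ n, ⋂ (_ : n ≥ N), {ω | ε * (n:ℝ) < |∑ i ∈ Finset.range n, X i ω|} := by
      ext ω; simp [hG_def]
    rw [this]
    refine MeasurableSet.iInter fun n => MeasurableSet.iInter fun _ => ?_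
    exact measurableSet_lt measurable_const (Finset.measurable_sum _ fun i _ => hmeas i).abs
  have hGmono : Monotone G := by
    intro N N' hNN' ω hω
    intro n hn
    exact hω n (le_trans hNN' hn)
  have hGunion : ℙ (⋃ N, G N) = 1 := by
    have hsub : ∀ᵐ ω ∂(ℙ : Measure Ω), ω ∈ ⋃ N, G N := by
      filter_upwards [hae] with ω hω
      obtain ⟨N, hN⟩ := eventually_atTop.1 hω
      exact Set.mem_iUnion.2 ⟨N, fun n hn => hN n hn⟩
    have hms : MeasurableSet (⋃ N, G N) := MeasurableSet.iUnion hGmeas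
    rw [← prob_compl_eq_zero_iff hms, Set.compl_def]
    exact ae_iff.1 hsub
  have htendG : Tendsto (fun N => ℙ (G N)) atTop (𝓝 1) := by
    have := tendsto_measure_iUnion_atTop (μ := (ℙ : Measure Ω)) hGmono
    rw [hGunion] at this
    exact this
  obtain ⟨N₁, hN₁⟩ : ∃ N₁ : ℕ, (1:ℝ≥0∞)/2 ≤ ℙ (G N₁) := by
    have := htendG.eventually (eventually_ge_nhds (by norm_num : (1:ℝ≥0∞)/2 < 1))
    exact this.exists
  -- lower bound on probabilities
  have hlower : ∀ n : ℕ, N₁ ≤ n + 1 →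
      (1:ℝ)/2 ≤ (ℙ {ω | ε * ((n:ℝ) + 1) < |∑ i ∈ Finset.range (n + 1), X i ω|}).toReal := by
    intro n hn
    have hsub : G N₁ ⊆ {ω | ε * ((n:ℝ) + 1) < |∑ i ∈ Finset.range (n + 1), X i ω|} := by
      intro ω hω
      have := hω (n+1) hn
      simpa using this
    have h1 : (1:ℝ≥0∞)/2 ≤ ℙ {ω | ε * ((n:ℝ) + 1) < |∑ i ∈ Finset.range (n + 1), X i ω|} :=
      le_trans hN₁ (measure_mono hsub)
    have := ENNReal.toReal_mono (measure_ne_top _ _) h1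
    simpa using this
  -- contradiction with summability
  have hsum := hyp ε hεpos
  have hsum2 : Summable (fun n : ℕ => (1 / ((n:ℝ)+1)) * (1/2)) := by
    have hcomp := (summable_nat_add_iff N₁).2 hsum
    rw [← summable_nat_add_iff N₁]
    apply Summable.of_nonneg_of_le (g := fun n : ℕ => (1 / (((n + N₁ : ℕ):ℝ)+1)) * (1/2)) ?_ ?_ hcomp
    · intro n; positivity
    · intro n
      have h1 := hlower (n + N₁) (by omega)
      exact mul_le_mul_of_nonneg_left h1 (by positivity)
  have : Summable (fun n : ℕ => 1 / ((n:ℝ)+1)) := by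
    have := hsum2.mul_right 2
    apply this.congr
    intro n
    field_simp
  have hdiv : ¬ Summable (fun n : ℕ => 1 / ((n:ℝ)+1)) := by
    intro h
    have h2 : Summable (fun n : ℕ => 1 / (((n+1:ℕ)):ℝ)) := by
      apply h.congr
      intro n
      push_cast
      ring
    have h3 : Summable (fun n : ℕ => 1 / (n:ℝ)) :=
      (summable_nat_add_iff (f := fun n : ℕ => 1 / (n:ℝ)) 1).1 h2
    exact Real.not_summable_one_div_natCast h3
  exact hdiv this

lemma spitzer_forward {Ω : Type*} [MeasureSpace Ω] [IsProbabilityMeasure (ℙ : Measure Ω)]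
    (X : ℕ → Ω → ℝ) (hmeas : ∀ i, Measurable (X i))
    (hindep : iIndepFun X (ℙ : Measure Ω))
    (hident : ∀ i, IdentDistrib (X i) (X 0) (ℙ : Measure Ω) (ℙ : Measure Ω))
    (hint : Integrable (X 0) (ℙ : Measure Ω))
    (hzero : (∫ ω, X 0 ω ∂(ℙ : Measure Ω)) = 0) {ε : ℝ} (hε : 0 < ε) :
    Summable (fun n : ℕ =>
        (1 / ((n : ℝ) + 1)) *
          (ℙ {ω | ε * ((n : ℝ) + 1) < |∑ i ∈ Finset.range (n + 1), X i ω|}).toReal) := by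
  classical
  set Xa : Ω → ℝ := fun ω => |X 0 ω| with hXa_def
  have hXa_nonneg : 0 ≤ Xa := fun ω => abs_nonneg _
  have hXa_int : Integrable Xa ℙ := hint.abs
  have htrunc_meas : ∀ (i : ℕ) (A : ℝ), Measurable (truncation (X i) A) :=
    fun i A => (measurable_id.indicator measurableSet_Ioc).comp (hmeas i)
  -- the truncated means tend to 0
  set c : ℕ → ℝ := fun m => ∫ ω, truncation (X 0) (m:ℝ) ω with hc_def
  have hc0 : Tendsto c atTop (𝓝 0) := by
    have h1 := tendsto_integral_truncation hint
    rw [hzero] at h1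
    exact h1.comp tendsto_natCast_atTop_atTop
  obtain ⟨M, hM⟩ : ∃ M : ℕ, ∀ m ≥ M, |c m| ≤ ε/2 := by
    have habs : Tendsto (fun m => |c m|) atTop (𝓝 0) := by simpa using hc0.abs
    have := habs.eventually (eventually_le_nhds (show (0:ℝ) < ε/2 by linarith))
    exact this.exists_forall_of_atTop
  -- truncated sums
  set T : ℕ → Ω → ℝ := fun m => ∑ i ∈ Finset.range m, truncation (X i) (m:ℝ) with hT_def
  have hT_apply : ∀ m ω, T m ω = ∑ i ∈ Finset.range m, truncation (X i) (m:ℝ) ω := by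
    intro m ω
    rw [hT_def]
    simp [Finset.sum_apply]
  have hT_memLp : ∀ m, MemLp (T m) 2 ℙ := by
    intro m
    apply memLp_finset_sum'
    intro i _
    exact (hmeas i).aestronglyMeasurable.memLp_truncation
  have htrunc_int : ∀ (i m : ℕ), Integrable (truncation (X i) (m:ℝ)) ℙ :=
    fun i m => (hmeas i).aestronglyMeasurable.integrable_truncation
  -- expectation of T m
  have hET : ∀ m : ℕ, (∫ ω, T m ω ∂(ℙ : Measure Ω)) = m * c m := by
    intro m
    have h1 : (∫ ω, T m ω ∂(ℙ : Measure Ω)) =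
        ∑ i ∈ Finset.range m, ∫ ω, truncation (X i) (m:ℝ) ω ∂(ℙ : Measure Ω) := by
      rw [show (fun ω => T m ω) = T m from rfl, hT_def]
      have := integral_finset_sum (μ := (ℙ : Measure Ω)) (Finset.range m)
        (f := fun i ω => truncation (X i) (m:ℝ) ω) (fun i _ => htrunc_int i m)
      rw [← this]
      congr 1
      ext ω
      simp [Finset.sum_apply]
    rw [h1]
    have h2 : ∀ i ∈ Finset.range m,
        (∫ ω, truncation (X i) (m:ℝ) ω ∂(ℙ : Measure Ω)) = c m := by
      intro i _
      exact ((hident i).truncation).integral_eq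
    rw [Finset.sum_congr rfl h2, Finset.sum_const, Finset.card_range, nsmul_eq_mul]
  -- variance bound
  set E2 : ℕ → ℝ := fun j => ∫ ω, (truncation Xa (j:ℝ) ω)^2 ∂(ℙ : Measure Ω) with hE2_def
  have hE2_nonneg : ∀ j, 0 ≤ E2 j := by
    intro j
    apply integral_nonneg
    intro ω
    exact sq_nonneg _
  have hVar : ∀ m : ℕ, 1 ≤ m → variance (T m) ℙ ≤ m * E2 m := by
    intro m hm
    have hmpos : (0:ℝ) < m := by exact_mod_cast hm
    have h1 : variance (T m) ℙ = ∑ i ∈ Finset.range m, variance (truncation (X i) (m:ℝ)) ℙ := by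
      rw [hT_def]
      exact IndepFun.variance_sum
        (fun i _ => (hmeas i).aestronglyMeasurable.memLp_truncation)
        (fun i _ j _ hij => (hindep.indepFun hij).comp
          (measurable_id.indicator measurableSet_Ioc)
          (measurable_id.indicator measurableSet_Ioc))
    have h2 : ∀ i ∈ Finset.range m, variance (truncation (X i) (m:ℝ)) ℙ =
        variance (truncation (X 0) (m:ℝ)) ℙ :=
      fun i _ => ((hident i).truncation).variance_eq
    have h3 : variance (truncation (X 0) (m:ℝ)) ℙ ≤ E2 m := by
      have h4 := variance_le_expectation_sq
        (μ := (ℙ : Measure Ω)) (X := truncation (X 0) (m:ℝ))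
        (htrunc_meas 0 (m:ℝ)).aestronglyMeasurable
      have h5 : 𝔼[truncation (X 0) (m:ℝ) ^ 2] ≤ E2 m := by
        rw [hE2_def]
        have hint1 : Integrable (truncation (X 0) (m:ℝ) ^ 2) ℙ := by
          have := (((hmeas 0).aestronglyMeasurable (μ := (ℙ : Measure Ω))).memLp_truncation
            (A := (m:ℝ)) (p := 2)).integrable_sq
          apply this.congr
          filter_upwards with ω
          simp [pow_two]
        have hint2 : Integrable (fun ω => (truncation Xa (m:ℝ) ω)^2) ℙ := by
          have := ((((hmeas 0).abs.aestronglyMeasurable (μ := (ℙ : Measure Ω))).memLp_truncation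
            (A := (m:ℝ)) (p := 2))).integrable_sq
          apply this.congr
          filter_upwards with ω
          simp [pow_two]
          rfl
        apply integral_mono hint1 hint2
        intro ω
        exact trunc_sq_le (X 0) hmpos ω
      linarith
    rw [h1, Finset.sum_congr rfl h2, Finset.sum_const, Finset.card_range, nsmul_eq_mul]
    have := Finset.card_range m
    exact mul_le_mul_of_nonneg_left h3 (by positivity)
  -- error probabilities
  set perr : ℕ → ℝ := fun m => (ℙ {ω | (m:ℝ) ≤ |X 0 ω|}).toReal with hperr_def
  -- main term bound for m ≥ M, m ≥ 1
  have hmain : ∀ m : ℕ, 1 ≤ m → M ≤ m →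
      (ℙ {ω | ε * (m:ℝ) < |∑ i ∈ Finset.range m, X i ω|}).toReal ≤
        m * perr m + (4/ε^2) * (E2 m / m) := by
    intro m hm1 hmM
    have hmpos : (0:ℝ) < m := by exact_mod_cast hm1
    set Chebev : Set Ω := {ω | ε/2*(m:ℝ) ≤ |T m ω - ∫ a, T m a ∂(ℙ : Measure Ω)|}
      with hCheb_def
    -- event inclusion
    have hsub : {ω | ε * (m:ℝ) < |∑ i ∈ Finset.range m, X i ω|} ⊆
        (⋃ i ∈ Finset.range m, {ω | (m:ℝ) ≤ |X i ω|}) ∪ Chebev := by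
      intro ω hω
      simp only [Set.mem_setOf_eq] at hω
      by_contra hcon
      have hcon1 : ω ∉ ⋃ i ∈ Finset.range m, {ω | (m:ℝ) ≤ |X i ω|} :=
        fun h => hcon (Set.mem_union_left _ h)
      have hcon2 : ω ∉ Chebev := fun h => hcon (Set.mem_union_right _ h)
      have hsmall : ∀ i ∈ Finset.range m, |X i ω| < (m:ℝ) := by
        intro i hi
        by_contra hge
        push_neg at hge
        exact hcon1 (Set.mem_biUnion hi hge)
      have hcheb : |T m ω - ∫ a, T m a ∂(ℙ : Measure Ω)| < ε/2*(m:ℝ) := by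
        by_contra hge
        push_neg at hge
        exact hcon2 hge
      have hTeq : T m ω = ∑ i ∈ Finset.range m, X i ω := by
        rw [hT_apply]
        apply Finset.sum_congr rfl
        intro i hi
        exact truncation_eq_self (hsmall i hi)
      have hE : |∫ a, T m a ∂(ℙ : Measure Ω)| ≤ ε/2 * m := by
        rw [hET m]
        rw [abs_mul, Nat.abs_cast]
        calc (m:ℝ) * |c m| ≤ (m:ℝ) * (ε/2) := by
              exact mul_le_mul_of_nonneg_left (hM m hmM) hmpos.le
          _ = ε/2 * m := by ring
      have h1 : |T m ω| < ε * m := by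
        have := abs_sub (T m ω) (∫ a, T m a ∂(ℙ : Measure Ω))
        have h2 : |T m ω| ≤ |T m ω - ∫ a, T m a ∂(ℙ : Measure Ω)| +
            |∫ a, T m a ∂(ℙ : Measure Ω)| := by
          calc |T m ω| = |(T m ω - ∫ a, T m a ∂(ℙ : Measure Ω)) +
              ∫ a, T m a ∂(ℙ : Measure Ω)| := by ring_nf
            _ ≤ _ := abs_add_le _ _
        linarith
      rw [hTeq] at h1
      linarith
    -- measure bound
    have hprob : ℙ {ω | ε * (m:ℝ) < |∑ i ∈ Finset.range m, X i ω|} ≤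
        (∑ i ∈ Finset.range m, ℙ {ω | (m:ℝ) ≤ |X i ω|}) + ℙ Chebev := by
      calc ℙ {ω | ε * (m:ℝ) < |∑ i ∈ Finset.range m, X i ω|}
          ≤ ℙ ((⋃ i ∈ Finset.range m, {ω | (m:ℝ) ≤ |X i ω|}) ∪ Chebev) := measure_mono hsub
        _ ≤ ℙ (⋃ i ∈ Finset.range m, {ω | (m:ℝ) ≤ |X i ω|}) + ℙ Chebev := measure_union_le _ _
        _ ≤ _ := by
            gcongr
            exact measure_biUnion_finset_le _ _
    have hXi : ∀ i : ℕ, ℙ {ω | (m:ℝ) ≤ |X i ω|} = ℙ {ω | (m:ℝ) ≤ |X 0 ω|} := by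
      intro i
      have hs : MeasurableSet {x : ℝ | (m:ℝ) ≤ |x|} :=
        measurableSet_le measurable_const continuous_abs.measurable
      exact (hident i).measure_mem_eq hs
    have hcheb : ℙ Chebev ≤ ENNReal.ofReal (variance (T m) ℙ / (ε/2*(m:ℝ))^2) := by
      rw [hCheb_def]
      exact meas_ge_le_variance_div_sq (hT_memLp m) (by positivity)
    -- to real numbers
    have hRHS_ne : (∑ i ∈ Finset.range m, ℙ {ω | (m:ℝ) ≤ |X i ω|}) + ℙ Chebev ≠ ⊤ :=
      ENNReal.add_ne_top.2 ⟨ENNReal.sum_ne_top.2 (fun i _ => measure_ne_top _ _),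
        measure_ne_top _ _⟩
    have h6 := ENNReal.toReal_mono hRHS_ne hprob
    rw [ENNReal.toReal_add (ENNReal.sum_ne_top.2 (fun i _ => measure_ne_top _ _))
      (measure_ne_top _ _), ENNReal.toReal_sum (fun i _ => measure_ne_top _ _)] at h6
    have h7 : ∑ i ∈ Finset.range m, (ℙ {ω | (m:ℝ) ≤ |X i ω|}).toReal = m * perr m := by
      have : ∀ i ∈ Finset.range m, (ℙ {ω | (m:ℝ) ≤ |X i ω|}).toReal = perr m := by
        intro i _
        rw [hXi i, hperr_def]
      rw [Finset.sum_congr rfl this, Finset.sum_const, Finset.card_range, nsmul_eq_mul]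
    have h8 : (ℙ Chebev).toReal ≤ variance (T m) ℙ / (ε/2*(m:ℝ))^2 := by
      have := ENNReal.toReal_mono ENNReal.ofReal_ne_top hcheb
      rwa [ENNReal.toReal_ofReal (div_nonneg (variance_nonneg _ _) (by positivity))] at this
    have h9 : variance (T m) ℙ / (ε/2*(m:ℝ))^2 ≤ (4/ε^2) * (E2 m / m) := by
      have hv := hVar m hm1
      have hvar_nonneg := variance_nonneg (T m) (ℙ : Measure Ω)
      rw [div_le_iff₀ (by positivity)]
      calc variance (T m) ℙ ≤ m * E2 m := hv
        _ = (4/ε^2) * (E2 m / m) * (ε/2*(m:ℝ))^2 := by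
            field_simp
            ring
    linarith
  -- summability of error terms
  have hperr_sum : Summable perr := by
    have h1 := tsum_prob_mem_Ioi_lt_top hXa_int hXa_nonneg
    have h2 : Summable (fun j : ℕ => (ℙ {ω | Xa ω ∈ Set.Ioi (j:ℝ)}).toReal) :=
      ENNReal.summable_toReal h1.ne
    rw [← summable_nat_add_iff 1]
    apply Summable.of_nonneg_of_le (fun n => ENNReal.toReal_nonneg) _ h2
    intro n
    apply ENNReal.toReal_mono (measure_ne_top _ _)
    apply measure_mono
    intro ω hω
    have h1 : ((n+1:ℕ):ℝ) ≤ |X 0 ω| := hω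
    have h2 : (n:ℝ) < |X 0 ω| := by push_cast at h1; linarith
    exact h2
  have hE2_sum : Summable (fun j : ℕ => ((j:ℝ)^2)⁻¹ * E2 j) := by
    apply summable_of_sum_range_le (c := 2 * 𝔼[Xa])
    · intro n
      exact mul_nonneg (by positivity) (hE2_nonneg n)
    · intro K
      have := sum_variance_truncation_le hXa_int hXa_nonneg K
      calc ∑ j ∈ Finset.range K, ((j:ℝ)^2)⁻¹ * E2 j
          = ∑ j ∈ Finset.range K, ((j:ℝ)^2)⁻¹ * 𝔼[truncation Xa (j:ℝ) ^ 2] := by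
            apply Finset.sum_congr rfl
            intro j _
            congr 1
        _ ≤ 2 * 𝔼[Xa] := this
  -- final assembly
  rw [← summable_nat_add_iff M]
  apply Summable.of_nonneg_of_le
    (f := fun n : ℕ => perr (n + M + 1) + (4/ε^2) * ((((n + M + 1 : ℕ):ℝ)^2)⁻¹ * E2 (n + M + 1)))
  · intro n
    positivity
  · intro n
    set m : ℕ := n + M + 1 with hm_def
    have hm1 : 1 ≤ m := by omega
    have hmM : M ≤ m := by omega
    have hmpos : (0:ℝ) < m := by exact_mod_cast hm1
    have hmain' := hmain m hm1 hmM
    have hcast : ((n + M : ℕ):ℝ) + 1 = (m:ℝ) := by push_cast [hm_def]; ring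
    have hrange : (n + M) + 1 = m := by omega
    calc (1 / (((n + M : ℕ):ℝ) + 1)) *
          (ℙ {ω | ε * (((n + M : ℕ):ℝ) + 1) < |∑ i ∈ Finset.range ((n + M) + 1), X i ω|}).toReal
        = (1 / (m:ℝ)) * (ℙ {ω | ε * (m:ℝ) < |∑ i ∈ Finset.range m, X i ω|}).toReal := by
          rw [hcast, hrange]
      _ ≤ (1 / (m:ℝ)) * (m * perr m + (4/ε^2) * (E2 m / m)) := by
          apply mul_le_mul_of_nonneg_left hmain' (by positivity)
      _ = perr m + (4/ε^2) * (((m:ℝ)^2)⁻¹ * E2 m) := by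
          field_simp
  · apply Summable.add
    · exact (summable_nat_add_iff (M + 1)).2 hperr_sum |>.congr (fun n => rfl)
    · exact Summable.mul_left _ (((summable_nat_add_iff (M + 1)).2 hE2_sum).congr (fun n => rfl))

theorem stmt_18 {Ω : Type*} [MeasureSpace Ω] [IsProbabilityMeasure (ℙ : Measure Ω)]
    (X : ℕ → Ω → ℝ) (hmeas : ∀ i, Measurable (X i))
    (hindep : iIndepFun X (ℙ : Measure Ω))
    (hident : ∀ i, IdentDistrib (X i) (X 0) (ℙ : Measure Ω) (ℙ : Measure Ω)) :
    (∀ ε : ℝ, 0 < ε →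
      Summable (fun n : ℕ =>
        (1 / ((n : ℝ) + 1)) *
          (ℙ {ω | ε * ((n : ℝ) + 1) < |∑ i ∈ Finset.range (n + 1), X i ω|}).toReal)) ↔
      (Integrable (X 0) (ℙ : Measure Ω) ∧ (∫ ω, X 0 ω ∂(ℙ : Measure Ω)) = 0) := by
  constructor
  · intro hyp
    have hint : Integrable (X 0) (ℙ : Measure Ω) :=
      spitzer_integrable X hmeas hindep hident (hyp (1/3) (by norm_num))
    exact ⟨hint, spitzer_mean_zero X hmeas hindep hident hint hyp⟩
  · rintro ⟨hint, hzero⟩ ε hε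
    exact spitzer_forward X hmeas hindep hident hint hzero hε
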